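/- The map v̂_0 is a chain map (d ∘ v̂_0 = v̂_0 ∘ d̂_0), and the induced map on homology H(Â_0) → H(B̂) is zero: for every c ∈ Â_0 with d̂_0(c) = 0, the element v̂_0(c) lies in the image of d. (This is the statement that the generator b_0 of H(B̂) is not the image of any cycle in Â_0, showing nu(T_{2,9} # -T_{2,3;2,5}) > 0; together with the nontriviality of v̂_1 on homology it gives nu(T_{2,9} # -T_{2,3;2,5}) = 1.) -/
import Mathlib


/-!
Let `F = ℤ/2ℤ`. `Bhat` (with basis `b 0, ..., b 12` and differential `d`) and
`Ahat0` (with basis `a 0, ..., a 12` and differential `d0`) are the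
13-dimensional `F`-vector space complexes described in the context, and
`v0 : Ahat0 → Bhat` is the `F`-linear map with `v0 (a i) = b i` for
`i ∈ {0,6,7,8,9,10,11,12}` and `v0 (a i) = 0` for `i ∈ {1,2,3,4,5}`.

STATEMENT: `v0` is a chain map (`d ∘ v0 = v0 ∘ d0`), and the induced map on
homology `H(Ahat0) → H(Bhat)` is zero: for every cycle `c` of `Ahat0`, the
element `v0 c` is a boundary in `Bhat`.
-/

noncomputable section

abbrev F : Type := ZMod 2

abbrev Bhat : Type := Fin 13 → F
abbrev Ahat0 : Type := Fin 13 → F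

/-- The standard basis of `Bhat`, modeling `b_0, ..., b_12`. -/
def b (i : Fin 13) : Bhat := Pi.single i 1

/-- The standard basis of `Ahat0`, modeling `â_0, ..., â_12`. -/
def a (i : Fin 13) : Ahat0 := Pi.single i 1

lemma expand (c : Fin 13 → F) : c = ∑ i, c i • (Pi.single i 1 : Fin 13 → F) := by
  have : ∀ i, c i • (Pi.single i 1 : Fin 13 → F) = Pi.single i (c i) := by
    intro i
    rw [← Pi.single_smul, smul_eq_mul, mul_one]
  simp_rw [this]
  exact (Finset.univ_sum_single c).symm

theorem v0_chain_map_trivial_on_homology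
    (d : Bhat →ₗ[F] Bhat)
    (hb0 : d (b 0) = 0) (hb1 : d (b 1) = 0)
    (hb2 : d (b 2) = b 1) (hb3 : d (b 3) = b 4)
    (hb4 : d (b 4) = 0) (hb5 : d (b 5) = b 6)
    (hb6 : d (b 6) = 0) (hb7 : d (b 7) = b 8)
    (hb8 : d (b 8) = 0) (hb9 : d (b 9) = b 10)
    (hb10 : d (b 10) = 0) (hb11 : d (b 11) = 0)
    (hb12 : d (b 12) = b 11)
    (d0 : Ahat0 →ₗ[F] Ahat0)
    (ha0 : d0 (a 0) = a 1) (ha1 : d0 (a 1) = 0)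
    (ha2 : d0 (a 2) = 0) (ha3 : d0 (a 3) = a 2)
    (ha4 : d0 (a 4) = 0) (ha5 : d0 (a 5) = a 4)
    (ha6 : d0 (a 6) = 0) (ha7 : d0 (a 7) = a 8)
    (ha8 : d0 (a 8) = 0) (ha9 : d0 (a 9) = a 10)
    (ha10 : d0 (a 10) = 0) (ha11 : d0 (a 11) = 0)
    (ha12 : d0 (a 12) = a 11)
    (v0 : Ahat0 →ₗ[F] Bhat)
    (hv0 : v0 (a 0) = b 0) (hv1 : v0 (a 1) = 0)
    (hv2 : v0 (a 2) = 0) (hv3 : v0 (a 3) = 0)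
    (hv4 : v0 (a 4) = 0) (hv5 : v0 (a 5) = 0)
    (hv6 : v0 (a 6) = b 6) (hv7 : v0 (a 7) = b 7)
    (hv8 : v0 (a 8) = b 8) (hv9 : v0 (a 9) = b 9)
    (hv10 : v0 (a 10) = b 10) (hv11 : v0 (a 11) = b 11)
    (hv12 : v0 (a 12) = b 12) :
    d.comp v0 = v0.comp d0 ∧
    (∀ c : Ahat0, d0 c = 0 → ∃ e : Bhat, v0 c = d e) := by
  constructor
  · apply (Pi.basisFun F (Fin 13)).ext
    intro i
    have hbasis : (Pi.basisFun F (Fin 13)) i = a i := by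
      simp [a, Pi.basisFun_apply]
    rw [hbasis]
    fin_cases i <;>
      simp [LinearMap.comp_apply, hv0, hv1, hv2, hv3, hv4, hv5, hv6, hv7, hv8, hv9, hv10,
        hv11, hv12, ha0, ha1, ha2, ha3, ha4, ha5, ha6, ha7, ha8, ha9, ha10, ha11, ha12,
        hb0, hb1, hb2, hb3, hb4, hb5, hb6, hb7, hb8, hb9, hb10, hb11, hb12]
  · intro c hc
    have hce : c = ∑ i, c i • a i := expand c
    have hd0 : d0 c = c 0 • a 1 + c 3 • a 2 + c 5 • a 4 + c 7 • a 8 + c 9 • a 10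
        + c 12 • a 11 := by
      conv_lhs => rw [hce]
      rw [map_sum]
      simp_rw [map_smul]
      rw [Fin.sum_univ_succ, Fin.sum_univ_succ, Fin.sum_univ_succ, Fin.sum_univ_succ,
        Fin.sum_univ_succ, Fin.sum_univ_succ, Fin.sum_univ_succ, Fin.sum_univ_succ,
        Fin.sum_univ_succ, Fin.sum_univ_succ, Fin.sum_univ_succ, Fin.sum_univ_succ,
        Fin.sum_univ_one]
      show c 0 • d0 (a 0) + (c 1 • d0 (a 1) + (c 2 • d0 (a 2) + (c 3 • d0 (a 3) + (c 4 • d0 (a 4) + (c 5 • d0 (a 5) + (c 6 • d0 (a 6) + (c 7 • d0 (a 7) + (c 8 • d0 (a 8) + (c 9 • d0 (a 9) + (c 10 • d0 (a 10) + (c 11 • d0 (a 11) + (c 12 • d0 (a 12))))))))))))) = _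
      rw [ha0, ha1, ha2, ha3, ha4, ha5, ha6, ha7, ha8, ha9, ha10, ha11, ha12]
      simp only [smul_zero, add_zero, zero_add]
      abel
    rw [hd0] at hc
    have key : ∀ j : Fin 13,
        c 0 * (a 1 : Ahat0) j + c 3 * (a 2 : Ahat0) j + c 5 * (a 4 : Ahat0) j
        + c 7 * (a 8 : Ahat0) j + c 9 * (a 10 : Ahat0) j + c 12 * (a 11 : Ahat0) j = 0 := by
      intro j
      have := congrFun hc j
      simpa [Pi.add_apply, Pi.smul_apply, smul_eq_mul] using this
    have h0 : c 0 = 0 := by simpa [a, Pi.single_apply] using key 1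
    have h3 : c 3 = 0 := by simpa [a, Pi.single_apply] using key 2
    have h5 : c 5 = 0 := by simpa [a, Pi.single_apply] using key 4
    have h7 : c 7 = 0 := by simpa [a, Pi.single_apply] using key 8
    have h9 : c 9 = 0 := by simpa [a, Pi.single_apply] using key 10
    have h12 : c 12 = 0 := by simpa [a, Pi.single_apply] using key 11
    refine ⟨c 6 • b 5 + c 8 • b 7 + c 10 • b 9 + c 11 • b 12, ?_⟩
    have hv : v0 c = c 6 • b 6 + c 8 • b 8 + c 10 • b 10 + c 11 • b 11 := by
      conv_lhs => rw [hce]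
      rw [map_sum]
      simp_rw [map_smul]
      rw [Fin.sum_univ_succ, Fin.sum_univ_succ, Fin.sum_univ_succ, Fin.sum_univ_succ,
        Fin.sum_univ_succ, Fin.sum_univ_succ, Fin.sum_univ_succ, Fin.sum_univ_succ,
        Fin.sum_univ_succ, Fin.sum_univ_succ, Fin.sum_univ_succ, Fin.sum_univ_succ,
        Fin.sum_univ_one]
      show c 0 • v0 (a 0) + (c 1 • v0 (a 1) + (c 2 • v0 (a 2) + (c 3 • v0 (a 3) + (c 4 • v0 (a 4) + (c 5 • v0 (a 5) + (c 6 • v0 (a 6) + (c 7 • v0 (a 7) + (c 8 • v0 (a 8) + (c 9 • v0 (a 9) + (c 10 • v0 (a 10) + (c 11 • v0 (a 11) + (c 12 • v0 (a 12))))))))))))) = _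
      rw [hv0, hv1, hv2, hv3, hv4, hv5, hv6, hv7, hv8, hv9, hv10, hv11, hv12,
        h0, h7, h9, h12]
      simp only [smul_zero, add_zero, zero_add, zero_smul]
      abel
    rw [hv]
    simp only [map_add, map_smul, hb5, hb7, hb9, hb12]

end
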